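/- Plücker quadratic relation (type a): Let Z be the generic upper unitriangular (n+1)×(n+1) matrix, Z^{cut} the n+1 × n matrix obtained by deleting its last column, U the generic upper unitriangular n×n matrix in independent variables u_{ij}, and U^{ext} the n×(n+1) matrix obtained by appending a zero column to U. For 1 ≤ α ≤ n define Φ_α = det of the (n+1)×(n+1) matrix whose rows are the first n+1−α rows of Z followed by the first α rows of U^{ext}, and Ψ_α = det of the n×n matrix whose rows are the first n−α rows of Z^{cut} followed by the first α rows of U. Let R_{kl} denote the Zhelobenko operator in the u-variables. Then for m < α ≤ β: ∑_{j=α+1}^{β+1} (R_{mj} Φ_α)·(R_{j(β+1)} Ψ_β) = −Φ_α · (R_{m(β+1)} Ψ_β) + Φ_{β+1} · (R_{mα} Ψ_{α−1}), where by convention R_{αα}Ψ_{α−1} := −Ψ_{α−1}, R_{(β+1)(β+1)}Ψ_β := −Ψ_β, and Ψ_0 := −1. -/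

import Mathlib

open MvPolynomial

/-- Polynomials in two families of variables: the entries `z_{ij}` (left summand,
1-based) of the generic upper unitriangular `(n+1) × (n+1)` matrix `Z`, and the
entries `u_{kl}` (right summand, 1-based) of the generic upper unitriangular
`n × n` matrix `U`. -/
abbrev Pzu : Type := MvPolynomial ((ℕ × ℕ) ⊕ (ℕ × ℕ)) ℂ

/-- The variable `z_{ij}`. -/
noncomputable def zv (i j : ℕ) : Pzu := X (Sum.inl (i, j))

/-- The variable `u_{ij}`. -/
noncomputable def uv (i j : ℕ) : Pzu := X (Sum.inr (i, j))

/-- The `j`-th entry of the `i`-th row (1-based) of the generic upper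
unitriangular matrix `Z`. -/
noncomputable def Zrow (i j : ℕ) : Pzu :=
  if i = j then 1 else if i < j then zv i j else 0

/-- The `j`-th entry of the `i`-th row (1-based) of the generic upper
unitriangular matrix `U`. -/
noncomputable def Urow (i j : ℕ) : Pzu :=
  if i = j then 1 else if i < j then uv i j else 0

/-- The `i`-th row of `U^{ext}`, i.e. of `U` with a zero `(n+1)`-st column
appended. -/
noncomputable def UextRow (n i j : ℕ) : Pzu :=
  if j ≤ n then Urow i j else 0

/-- The Zhelobenko operator `R^u_{kl} = ∂/∂u_{kl} + ∑_{j>l} u_{lj} ∂/∂u_{kj}`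
in the `u`-variables (which range over `1 ≤ i < j ≤ n`). -/
noncomputable def Ru (n k l : ℕ) (p : Pzu) : Pzu :=
  pderiv (Sum.inr (k, l)) p +
    ∑ j ∈ Finset.Icc (l + 1) n, uv l j * pderiv (Sum.inr (k, j)) p

/-- The Zhelobenko operator `R^z_{kl} = ∂/∂z_{kl} + ∑_{j>l} z_{lj} ∂/∂z_{kj}`
in the `z`-variables (which range over `1 ≤ i < j ≤ n+1`). -/
noncomputable def Rz (n k l : ℕ) (p : Pzu) : Pzu :=
  pderiv (Sum.inl (k, l)) p +
    ∑ j ∈ Finset.Icc (l + 1) (n + 1), zv l j * pderiv (Sum.inl (k, j)) p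

/-- `Φ_α`: the determinant of the `(n+1) × (n+1)` matrix whose rows are the
first `n+1−α` rows of `Z` followed by the first `α` rows of `U^{ext}`. -/
noncomputable def Phi (n α : ℕ) : Pzu :=
  Matrix.det (Matrix.of fun a b : Fin (n + 1) =>
    if (a : ℕ) + 1 ≤ n + 1 - α then Zrow ((a : ℕ) + 1) ((b : ℕ) + 1)
    else UextRow n ((a : ℕ) + 1 - (n + 1 - α)) ((b : ℕ) + 1))

/-- `Ψ_α`: the determinant of the `n × n` matrix whose rows are the first `n−α`
rows of `Z^{cut}` (`Z` with its last column deleted) followed by the first `α`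
rows of `U`. -/
noncomputable def Psi (n α : ℕ) : Pzu :=
  Matrix.det (Matrix.of fun a b : Fin n =>
    if (a : ℕ) + 1 ≤ n - α then Zrow ((a : ℕ) + 1) ((b : ℕ) + 1)
    else Urow ((a : ℕ) + 1 - (n - α)) ((b : ℕ) + 1))

open Matrix Finset

section General
variable {R : Type*} [CommRing R] {σ : Type*}

lemma pderiv_finset_prod {ι : Type*} [DecidableEq ι] (v : σ) (s : Finset ι)
    (f : ι → MvPolynomial σ R) :
    pderiv v (∏ i ∈ s, f i) = ∑ i ∈ s, pderiv v (f i) * ∏ j ∈ s.erase i, f j := by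
  classical
  induction s using Finset.induction_on with
  | empty => simp
  | @insert a s ha ih =>
    rw [Finset.prod_insert ha, Derivation.leibniz, Finset.sum_insert ha,
      Finset.erase_insert ha, add_comm, smul_eq_mul, smul_eq_mul, ih, Finset.mul_sum]
    congr 1
    · ring
    · apply Finset.sum_congr rfl
      intro i hi
      have hia : i ≠ a := by rintro rfl; exact ha hi
      rw [Finset.erase_insert_of_ne hia.symm,
        Finset.prod_insert (fun h => ha (Finset.mem_of_mem_erase h))]
      ring

lemma pderiv_det_col {ι : Type*} [DecidableEq ι] [Fintype ι] (v : σ)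
    (M : Matrix ι ι (MvPolynomial σ R)) :
    pderiv v M.det = ∑ c, (M.updateCol c (fun r => pderiv v (M r c))).det := by
  classical
  have hc : ∀ (c : ℤˣ) (f : MvPolynomial σ R),
      pderiv v ((((c : ℤ) : ℤ) : MvPolynomial σ R) * f)
        = (((c : ℤ) : ℤ) : MvPolynomial σ R) * pderiv v f := by
    intro c f
    rcases Int.units_eq_one_or c with h | h <;> simp [h]
  have key : ∀ c : ι, (M.updateCol c (fun r => pderiv v (M r c))).det
      = ∑ σp : Equiv.Perm ι, ((Equiv.Perm.sign σp : ℤ) : MvPolynomial σ R) *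
          (pderiv v (M (σp c) c) * ∏ j ∈ univ.erase c, M (σp j) j) := by
    intro c
    rw [det_apply']
    refine Finset.sum_congr rfl fun σp _ => ?_
    congr 1
    rw [← Finset.mul_prod_erase univ _ (Finset.mem_univ c)]
    congr 1
    · simp [updateCol_apply]
    · refine Finset.prod_congr rfl fun j hj => ?_
      rw [updateCol_apply, if_neg (Finset.ne_of_mem_erase hj)]
  rw [det_apply', map_sum]
  simp_rw [key]
  rw [Finset.sum_comm]
  refine Finset.sum_congr rfl fun σp _ => ?_
  rw [hc, pderiv_finset_prod, Finset.mul_sum]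

lemma pderiv_det {ι : Type*} [DecidableEq ι] [Fintype ι] (v : σ)
    (M : Matrix ι ι (MvPolynomial σ R)) :
    pderiv v M.det = ∑ r, (M.updateRow r (fun b => pderiv v (M r b))).det := by
  rw [← det_transpose, pderiv_det_col]
  refine Finset.sum_congr rfl fun r _ => ?_
  rw [← det_transpose (M.updateRow r _), ← updateCol_transpose]
  rfl

lemma det_updateRow_finset_sum {ι κ : Type*} [DecidableEq ι] [Fintype ι]
    (M : Matrix ι ι R) (r : ι) (s : Finset κ) (c : κ → R) (v : κ → ι → R) :
    (M.updateRow r (fun b => ∑ i ∈ s, c i * v i b)).det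
      = ∑ i ∈ s, c i * (M.updateRow r (v i)).det := by
  classical
  induction s using Finset.induction_on with
  | empty =>
    simp only [Finset.sum_empty]
    exact det_eq_zero_of_row_eq_zero r (by simp)
  | @insert a s ha ih =>
    simp only [Finset.sum_insert ha]
    have h2 : (fun b => c a * v a b + ∑ i ∈ s, c i * v i b)
        = (c a • v a) + (fun b => ∑ i ∈ s, c i * v i b) := by
      funext b; simp [Pi.add_apply, smul_eq_mul]
    rw [h2, det_updateRow_add, det_updateRow_smul, ih]

end General

lemma pderiv_Zrow (k c i j : ℕ) : pderiv (Sum.inr (k, c)) (Zrow i j) = 0 := by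
  unfold Zrow zv
  split_ifs <;> simp [pderiv_X_of_ne]

lemma pderiv_Urow_ne {k i : ℕ} (h : i ≠ k) (c j : ℕ) :
    pderiv (Sum.inr (k, c)) (Urow i j) = 0 := by
  unfold Urow uv
  split_ifs <;> simp [pderiv_X_of_ne, h, Prod.ext_iff]

lemma pderiv_UextRow_ne {k i : ℕ} (h : i ≠ k) (n c j : ℕ) :
    pderiv (Sum.inr (k, c)) (UextRow n i j) = 0 := by
  unfold UextRow
  split_ifs <;> simp [pderiv_Urow_ne h]

lemma pderiv_UextRow_self (n k c j : ℕ) :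
    pderiv (Sum.inr (k, c)) (UextRow n k j)
      = if j ≤ n ∧ k < j ∧ j = c then 1 else 0 := by
  unfold UextRow Urow uv
  by_cases h1 : j ≤ n
  · rw [if_pos h1]
    by_cases h2 : k = j
    · rw [if_pos h2, pderiv_one, if_neg (by omega)]
    · rw [if_neg h2]
      by_cases h3 : k < j
      · rw [if_pos h3]
        rcases eq_or_ne j c with rfl | h4
        · rw [pderiv_X_self, if_pos ⟨h1, h3, rfl⟩]
        · rw [pderiv_X_of_ne (by simpa using h4), if_neg (by omega)]
      · rw [if_neg h3, map_zero, if_neg (by omega)]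
  · rw [if_neg h1, map_zero, if_neg (by omega)]

/-- The key computation: the Zhelobenko operator `R^u_{kl}` applied to a
determinant having exactly one row equal to the `k`-th row of `U^{ext}`
(all other rows being free of the variables `u_{k-}`) replaces that row
by the `l`-th row of `U^{ext}`. -/
lemma Ru_det {N : ℕ} {n k l : ℕ} (hkl : k < l) (hln : l ≤ n)
    (M : Matrix (Fin N) (Fin N) Pzu) (r₀ : Fin N)
    (h1 : ∀ b, M r₀ b = UextRow n k ((b : ℕ) + 1))
    (h2 : ∀ r, r ≠ r₀ → ∀ c b, pderiv (Sum.inr (k, c)) (M r b) = 0) :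
    Ru n k l M.det = (M.updateRow r₀ (fun b => UextRow n l ((b : ℕ) + 1))).det := by
  have hD : ∀ c : ℕ, k < c → c ≤ n → pderiv (Sum.inr (k, c)) M.det
      = (M.updateRow r₀ (fun b => if (b : ℕ) + 1 = c then (1 : Pzu) else 0)).det := by
    intro c hkc hcn
    rw [pderiv_det]
    rw [Finset.sum_eq_single r₀]
    · have hrow : (fun b : Fin N => pderiv (Sum.inr (k, c)) (M r₀ b))
          = fun b : Fin N => if (b : ℕ) + 1 = c then (1 : Pzu) else 0 := by
        funext b
        rw [h1 b, pderiv_UextRow_self]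
        exact if_congr (by omega) rfl rfl
      rw [hrow]
    · intro r _ hr
      refine det_eq_zero_of_row_eq_zero r fun b => ?_
      rw [updateRow_self]
      exact h2 r hr c b
    · intro h; exact absurd (Finset.mem_univ r₀) h
  unfold Ru
  rw [hD l hkl hln]
  have hsum : ∀ j ∈ Finset.Icc (l + 1) n, uv l j * pderiv (Sum.inr (k, j)) M.det
      = uv l j * (M.updateRow r₀ (fun b => if (b : ℕ) + 1 = j then (1 : Pzu) else 0)).det := by
    intro j hj
    rw [Finset.mem_Icc] at hj
    rw [hD j (by omega) hj.2]
  rw [Finset.sum_congr rfl hsum, ← det_updateRow_finset_sum, ← det_updateRow_add]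
  have hfin : ((fun b : Fin N => if (b : ℕ) + 1 = l then (1 : Pzu) else 0) +
      fun b : Fin N => ∑ j ∈ Finset.Icc (l + 1) n, uv l j *
        (if (b : ℕ) + 1 = j then (1 : Pzu) else 0))
      = fun b : Fin N => UextRow n l ((b : ℕ) + 1) := by
    funext b
    have hs : ∑ j ∈ Finset.Icc (l + 1) n, uv l j * (if (b : ℕ) + 1 = j then (1 : Pzu) else 0)
        = if (b : ℕ) + 1 ∈ Finset.Icc (l + 1) n then uv l ((b : ℕ) + 1) else 0 := by
      simp only [mul_ite, mul_one, mul_zero]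
      exact Finset.sum_ite_eq (Finset.Icc (l + 1) n) ((b : ℕ) + 1) (fun j => uv l j)
    show (if (b : ℕ) + 1 = l then (1 : Pzu) else 0) +
        (∑ j ∈ Finset.Icc (l + 1) n, uv l j * (if (b : ℕ) + 1 = j then (1 : Pzu) else 0))
        = UextRow n l ((b : ℕ) + 1)
    rw [hs]
    simp only [Finset.mem_Icc]
    unfold UextRow Urow
    by_cases hb1 : (b : ℕ) + 1 = l
    · rw [if_pos hb1, if_neg (by omega), if_pos (by omega), if_pos (by omega), add_zero]
    · rw [if_neg hb1]
      by_cases hb2 : l + 1 ≤ (b : ℕ) + 1 ∧ (b : ℕ) + 1 ≤ n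
      · rw [if_pos hb2, if_pos (by omega), if_neg (by omega), if_pos (by omega), zero_add]
      · rw [if_neg hb2]
        by_cases hb3 : (b : ℕ) + 1 ≤ n
        · rw [if_pos hb3, if_neg (by omega), if_neg (by omega), add_zero]
        · rw [if_neg hb3, add_zero]
  rw [hfin]

lemma det_of_last_row_single {n : ℕ} (C : Matrix (Fin (n + 1)) (Fin (n + 1)) Pzu)
    (h : ∀ b, C (Fin.last n) b = if (b : ℕ) = n then 1 else 0) :
    C.det = (C.submatrix Fin.castSucc Fin.castSucc).det := by
  rw [det_succ_row C (Fin.last n)]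
  rw [Finset.sum_eq_single (Fin.last n)]
  · rw [h, if_pos (by simp), Fin.succAbove_last]
    simp [Fin.val_last, pow_add, ← mul_pow]
  · intro j _ hj
    rw [h, if_neg (by simpa [Fin.ext_iff] using hj), mul_zero, zero_mul]
  · intro hmem; exact absurd (Finset.mem_univ _) hmem

lemma cramer_rows {N : Type*} [Fintype N] [DecidableEq N]
    (B : Matrix N N Pzu) (w : N → Pzu) (b : N) :
    B.det * w b = ∑ r, (B.updateRow r w).det * B r b := by
  have h := congrFun (Matrix.mulVec_cramer Bᵀ w) b
  rw [Matrix.mulVec, dotProduct] at h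
  simp only [Matrix.cramer_apply, Matrix.updateCol_transpose, Matrix.det_transpose,
    Matrix.transpose_apply, Pi.smul_apply, smul_eq_mul] at h
  rw [← h]
  exact Finset.sum_congr rfl fun r _ => mul_comm _ _

/-- The matrix whose determinant is `Φ_α`. -/
noncomputable def Amat (n α : ℕ) : Matrix (Fin (n + 1)) (Fin (n + 1)) Pzu :=
  Matrix.of fun a b : Fin (n + 1) =>
    if (a : ℕ) + 1 ≤ n + 1 - α then Zrow ((a : ℕ) + 1) ((b : ℕ) + 1)
    else UextRow n ((a : ℕ) + 1 - (n + 1 - α)) ((b : ℕ) + 1)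

/-- The matrix whose determinant is `Ψ_β`. -/
noncomputable def Pmat (n β : ℕ) : Matrix (Fin n) (Fin n) Pzu :=
  Matrix.of fun a b : Fin n =>
    if (a : ℕ) + 1 ≤ n - β then Zrow ((a : ℕ) + 1) ((b : ℕ) + 1)
    else Urow ((a : ℕ) + 1 - (n - β)) ((b : ℕ) + 1)

/-- The `Ψ_β` matrix extended to size `n+1` by a standard basis last row. -/
noncomputable def Bmat (n β : ℕ) : Matrix (Fin (n + 1)) (Fin (n + 1)) Pzu :=
  Matrix.of fun a b : Fin (n + 1) =>
    if (a : ℕ) = n then (if (b : ℕ) = n then 1 else 0)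
    else if (a : ℕ) + 1 ≤ n - β then Zrow ((a : ℕ) + 1) ((b : ℕ) + 1)
    else UextRow n ((a : ℕ) + 1 - (n - β)) ((b : ℕ) + 1)

lemma Phi_eq (n α : ℕ) : Phi n α = (Amat n α).det := rfl
lemma Psi_eq (n β : ℕ) : Psi n β = (Pmat n β).det := rfl

lemma UextRow_eq_Urow {n j : ℕ} (h : j ≤ n) (i : ℕ) : UextRow n i j = Urow i j :=
  if_pos h

/-- Bridge: determinant of `Bmat` with one (non-last) row replaced equals the
corresponding `n x n` determinant. -/
lemma Bmat_updateRow_det (n β t : ℕ) (hβ : β ≤ n) (r : Fin (n + 1)) (hr : (r : ℕ) < n) :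
    ((Bmat n β).updateRow r (fun b => UextRow n t ((b : ℕ) + 1))).det
      = ((Pmat n β).updateRow ⟨(r : ℕ), hr⟩
          (fun b => Urow t ((b : ℕ) + 1))).det := by
  rw [det_of_last_row_single]
  · congr 1
    refine Matrix.ext fun a b => ?_
    simp only [Matrix.submatrix_apply, Matrix.updateRow_apply, Bmat, Pmat, Matrix.of_apply,
      Fin.coe_castSucc]
    by_cases hap : Fin.castSucc a = r
    · rw [if_pos hap, if_pos (by simp [Fin.ext_iff, ← hap]), UextRow_eq_Urow (by omega)]
    · rw [if_neg hap, if_neg (show ¬ a = ⟨(r : ℕ), hr⟩ by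
        rw [Fin.ext_iff]; simpa [Fin.ext_iff] using hap)]
      by_cases hz : (a : ℕ) + 1 ≤ n - β
      · rw [if_pos hz, if_pos hz, if_neg (by omega : ¬ ((a : ℕ) = n))]
      · rw [if_neg hz, if_neg hz, UextRow_eq_Urow (by omega),
          if_neg (by omega : ¬ ((a : ℕ) = n))]
  · intro b
    rw [Matrix.updateRow_ne (by simp [Fin.ext_iff]; omega)]
    simp [Bmat]

lemma Bmat_det (n β : ℕ) (hβ : β ≤ n) : (Bmat n β).det = Psi n β := by
  rw [Psi_eq, det_of_last_row_single]
  · congr 1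
    refine Matrix.ext fun a b => ?_
    simp only [Matrix.submatrix_apply, Bmat, Pmat, Matrix.of_apply, Fin.coe_castSucc]
    rw [if_neg (by omega : ¬ ((a : ℕ) = n))]
    by_cases hz : (a : ℕ) + 1 ≤ n - β
    · rw [if_pos hz, if_pos hz]
    · rw [if_neg hz, if_neg hz, UextRow_eq_Urow (by omega)]
  · intro b
    simp [Bmat]

lemma row_cut (n t : ℕ) :
    (fun b : Fin n => UextRow n t ((b : ℕ) + 1)) = fun b : Fin n => Urow t ((b : ℕ) + 1) :=
  funext fun b => UextRow_eq_Urow (by omega) t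

/-- `R_{mj}` applied to `Φ_α`. -/
lemma Ru_Phi (n m α j : ℕ) (hm : 1 ≤ m) (hmα : m ≤ α) (hαn : α ≤ n)
    (hmj : m < j) (hjn : j ≤ n) :
    Ru n m j (Phi n α)
      = ((Amat n α).updateRow ⟨n - α + m, by omega⟩
          (fun b => UextRow n j ((b : ℕ) + 1))).det := by
  rw [Phi_eq]
  apply Ru_det hmj hjn
  · intro b
    simp only [Amat, Matrix.of_apply]
    rw [if_neg (by simp; omega)]
    congr 1
    omega
  · intro r hr c b
    simp only [Amat, Matrix.of_apply]
    by_cases hz : (r : ℕ) + 1 ≤ n + 1 - α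
    · rw [if_pos hz]; exact pderiv_Zrow _ _ _ _
    · rw [if_neg hz]
      refine pderiv_UextRow_ne ?_ _ _ _
      have : (r : ℕ) ≠ n - α + m := by
        intro hcon; exact hr (Fin.ext (by simpa using hcon))
      omega

/-- `R_{j(β+1)}` applied to `Ψ_β` (as an `n × n` determinant). -/
lemma Ru_Psi (n β j : ℕ) (hj1 : 1 ≤ j) (hjβ : j ≤ β) (hβn : β + 1 ≤ n) :
    Ru n j (β + 1) (Psi n β)
      = ((Pmat n β).updateRow ⟨n - β + j - 1, by omega⟩
          (fun b => UextRow n (β + 1) ((b : ℕ) + 1))).det := by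
  rw [Psi_eq]
  apply Ru_det (by omega) (by omega)
  · intro b
    simp only [Pmat, Matrix.of_apply]
    rw [if_neg (by simp; omega), ← UextRow_eq_Urow (show (b : ℕ) + 1 ≤ n by omega)]
    congr 1
    omega
  · intro r hr c b
    simp only [Pmat, Matrix.of_apply]
    by_cases hz : (r : ℕ) + 1 ≤ n - β
    · rw [if_pos hz]; exact pderiv_Zrow _ _ _ _
    · rw [if_neg hz]
      refine pderiv_Urow_ne ?_ _ _
      have : (r : ℕ) ≠ n - β + j - 1 := by
        intro hcon; exact hr (Fin.ext (by simpa using hcon))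
      omega

/-- `R_{mα}` applied to `Ψ_{α-1}` (as an `n × n` determinant). -/
lemma Ru_Psi_alpha (n m α : ℕ) (hm : 1 ≤ m) (hmα : m < α) (hαn : α ≤ n) :
    Ru n m α (Psi n (α - 1))
      = ((Pmat n (α - 1)).updateRow ⟨n - α + m, by omega⟩
          (fun b => UextRow n α ((b : ℕ) + 1))).det := by
  rw [Psi_eq]
  apply Ru_det hmα hαn
  · intro b
    simp only [Pmat, Matrix.of_apply]
    rw [if_neg (by simp; omega), ← UextRow_eq_Urow (show (b : ℕ) + 1 ≤ n by omega)]
    congr 1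
    omega
  · intro r hr c b
    simp only [Pmat, Matrix.of_apply]
    by_cases hz : (r : ℕ) + 1 ≤ n - (α - 1)
    · rw [if_pos hz]; exact pderiv_Zrow _ _ _ _
    · rw [if_neg hz]
      refine pderiv_Urow_ne ?_ _ _
      have : (r : ℕ) ≠ n - α + m := by
        intro hcon; exact hr (Fin.ext (by simpa using hcon))
      omega

/-- `Φ_{β+1}` as `Bmat` with its last row replaced by the `(β+1)`-st row of `U^{ext}`. -/
lemma Phi_beta1 (n β : ℕ) (hβn : β + 1 ≤ n) :
    Phi n (β + 1)
      = ((Bmat n β).updateRow (Fin.last n)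
          (fun b => UextRow n (β + 1) ((b : ℕ) + 1))).det := by
  rw [Phi_eq]
  congr 1
  refine Matrix.ext fun a b => ?_
  rw [Matrix.updateRow_apply]
  by_cases ha : a = Fin.last n
  · rw [if_pos ha, ha]
    simp only [Amat, Matrix.of_apply, Fin.val_last]
    rw [if_neg (by omega)]
    congr 1
    omega
  · rw [if_neg ha]
    have han : (a : ℕ) ≠ n := by
      intro hcon; exact ha (Fin.ext (by simpa using hcon))
    simp only [Amat, Bmat, Matrix.of_apply]
    rw [if_neg han]
    have he : n + 1 - (β + 1) = n - β := by omega
    rw [he]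

/-- The determinant of `Φ_α`'s matrix with the `u_m` row replaced by the last
standard basis vector equals minus `R_{mα} Ψ_{α-1}`. -/
lemma detA_erow (n m α : ℕ) (hm : 1 ≤ m) (hmα : m < α) (hαn : α ≤ n) :
    ((Amat n α).updateRow ⟨n - α + m, by omega⟩
        (fun b => if (b : ℕ) = n then (1 : Pzu) else 0)).det
      = - Ru n m α (Psi n (α - 1)) := by
  rw [Ru_Psi_alpha n m α hm hmα hαn]
  set p : Fin (n + 1) := ⟨n - α + m, by omega⟩ with hp
  set D : Matrix (Fin (n + 1)) (Fin (n + 1)) Pzu :=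
    (Amat n α).updateRow p (fun b => if (b : ℕ) = n then (1 : Pzu) else 0) with hD
  have hpl : p ≠ Fin.last n := by
    simp only [hp, Fin.ne_iff_vne, Fin.val_last]; omega
  have hswap : (D.submatrix (Equiv.swap p (Fin.last n)) id).det = - D.det := by
    rw [Matrix.det_permute, Equiv.Perm.sign_swap hpl]
    simp
  have hsub : (D.submatrix (Equiv.swap p (Fin.last n)) id).det
      = ((Pmat n (α - 1)).updateRow ⟨n - α + m, by omega⟩
          (fun b => UextRow n α ((b : ℕ) + 1))).det := by
    rw [det_of_last_row_single]
    · congr 1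
      refine Matrix.ext fun a b => ?_
      simp only [Matrix.submatrix_apply, id_eq]
      by_cases ha : (a : ℕ) = n - α + m
      · have hap : Fin.castSucc a = p := Fin.ext (by simpa using ha)
        rw [hap, Equiv.swap_apply_left, hD, Matrix.updateRow_ne hpl.symm]
        simp only [Amat, Matrix.of_apply, Fin.val_last]
        rw [if_neg (by omega), Matrix.updateRow_apply,
          if_pos (Fin.ext (by simpa using ha.symm)).symm,
          show n + 1 - (n + 1 - α) = α from by omega, Fin.coe_castSucc]
      · have h1 : Fin.castSucc a ≠ p := by
          intro hcon; exact ha (by simpa [hp, Fin.ext_iff] using hcon)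
        have h2 : Fin.castSucc a ≠ Fin.last n := by
          simp only [Fin.ne_iff_vne, Fin.coe_castSucc, Fin.val_last]; omega
        rw [Equiv.swap_apply_of_ne_of_ne h1 h2, hD, Matrix.updateRow_ne h1,
          Matrix.updateRow_apply, if_neg (by
            intro hcon
            exact ha (by simpa [Fin.ext_iff] using hcon))]
        simp only [Amat, Pmat, Matrix.of_apply, Fin.coe_castSucc]
        have he : n - (α - 1) = n + 1 - α := by omega
        rw [he]
        by_cases hz : (a : ℕ) + 1 ≤ n + 1 - α
        · rw [if_pos hz, if_pos hz]
        · rw [if_neg hz, if_neg hz, UextRow_eq_Urow (by omega)]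
    · intro b
      simp only [Matrix.submatrix_apply, id_eq, Equiv.swap_apply_right, hD,
        Matrix.updateRow_self]
  rw [← hsub, hswap, neg_neg]

lemma Bmat_row_z (n β : ℕ) (r : Fin (n + 1)) (h1 : (r : ℕ) + 1 ≤ n - β) (b : Fin (n + 1)) :
    Bmat n β r b = Zrow ((r : ℕ) + 1) ((b : ℕ) + 1) := by
  simp only [Bmat, Matrix.of_apply]
  rw [if_neg (by omega), if_pos h1]

lemma Bmat_row_u (n β : ℕ) (r : Fin (n + 1)) (h1 : n - β ≤ (r : ℕ)) (h2 : (r : ℕ) < n)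
    (b : Fin (n + 1)) :
    Bmat n β r b = UextRow n ((r : ℕ) + 1 - (n - β)) ((b : ℕ) + 1) := by
  simp only [Bmat, Matrix.of_apply]
  rw [if_neg (by omega), if_neg (by omega)]

lemma Bmat_row_last (n β : ℕ) (b : Fin (n + 1)) :
    Bmat n β (Fin.last n) b = if (b : ℕ) = n then 1 else 0 := by
  simp [Bmat]

lemma Amat_row_z (n α : ℕ) (r : Fin (n + 1)) (h1 : (r : ℕ) + 1 ≤ n + 1 - α) (b : Fin (n + 1)) :
    Amat n α r b = Zrow ((r : ℕ) + 1) ((b : ℕ) + 1) := by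
  simp only [Amat, Matrix.of_apply]
  rw [if_pos h1]

lemma Amat_row_u (n α : ℕ) (r : Fin (n + 1)) (h1 : n + 1 - α ≤ (r : ℕ)) (b : Fin (n + 1)) :
    Amat n α r b = UextRow n ((r : ℕ) + 1 - (n + 1 - α)) ((b : ℕ) + 1) := by
  simp only [Amat, Matrix.of_apply]
  rw [if_neg (by omega)]

/-- Vanishing of the irrelevant terms in the Cramer expansion. -/
lemma vanish (n m α β : ℕ) (hm : 1 ≤ m) (hmα : m < α) (hαβ : α ≤ β) (hβn : β + 1 ≤ n)
    (r : Fin (n + 1)) (h1 : (r : ℕ) ≠ n) (h2 : (r : ℕ) + 1 - (n - β) ≠ m)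
    (h3 : ¬(α + 1 ≤ (r : ℕ) + 1 - (n - β) ∧ (r : ℕ) + 1 - (n - β) ≤ β)) :
    ((Amat n α).updateRow ⟨n - α + m, by omega⟩ ((Bmat n β) r)).det = 0 := by
  set p : Fin (n + 1) := ⟨n - α + m, by omega⟩ with hp
  by_cases hz : (r : ℕ) + 1 ≤ n - β
  · refine Matrix.det_zero_of_row_eq (show r ≠ p by
      simp only [hp, Fin.ne_iff_vne]; omega) (funext fun b => ?_)
    rw [Matrix.updateRow_ne (show r ≠ p by simp only [hp, Fin.ne_iff_vne]; omega),
      Matrix.updateRow_self, Amat_row_z n α r (by omega) b, Bmat_row_z n β r hz b]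
  · set q : Fin (n + 1) := ⟨n - α + ((r : ℕ) + 1 - (n - β)), by omega⟩ with hq
    have hqp : q ≠ p := by
      simp only [hq, hp, Fin.ne_iff_vne]; omega
    refine Matrix.det_zero_of_row_eq hqp (funext fun b => ?_)
    rw [Matrix.updateRow_ne hqp, Matrix.updateRow_self,
      Amat_row_u n α q (by simp [hq]; omega) b, Bmat_row_u n β r (by omega) (by omega) b]
    congr 1
    simp [hq]
    omega

/-- Total function giving the row index of `u_j` inside `Bmat n β`. -/
def rBF (n β j : ℕ) : Fin (n + 1) := ⟨min (n - β + j - 1) n, by omega⟩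

lemma rBF_val (n β j : ℕ) (h : n - β + j - 1 ≤ n) : ((rBF n β j : ℕ)) = n - β + j - 1 := by
  simp [rBF]; omega

/-- Plücker quadratic relation (type a). For `m < α ≤ β` (and
`β + 1 ≤ n`):
`∑_{j=α+1}^{β+1} (R_{mj} Φ_α)(R_{j(β+1)} Ψ_β)
  = −Φ_α · R_{m(β+1)} Ψ_β + Φ_{β+1} · R_{mα} Ψ_{α−1}`,
where the `j = β+1` term uses the convention `R_{(β+1)(β+1)} Ψ_β := −Ψ_β`
(all operators are the Zhelobenko operators in the `u`-variables). -/
theorem plucker_relation_a (n m α β : ℕ) (hm : 1 ≤ m) (hmα : m < α)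
    (hαβ : α ≤ β) (hβn : β + 1 ≤ n) :
    (∑ j ∈ Finset.Icc (α + 1) β, Ru n m j (Phi n α) * Ru n j (β + 1) (Psi n β)) +
        Ru n m (β + 1) (Phi n α) * (-(Psi n β))
      = -(Phi n α) * Ru n m (β + 1) (Psi n β) +
          Phi n (β + 1) * Ru n m α (Psi n (α - 1)) := by
  have hαn : α ≤ n := by omega
  have hpf : n - α + m < n + 1 := by omega
  have hrBFv : ∀ j : ℕ, j ≤ β + 1 → ((rBF n β j : ℕ)) = n - β + j - 1 :=
    fun j hj => rBF_val n β j (by omega)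
  -- Step 1: rewrite all the Zhelobenko images as determinants.
  have e1 : ∀ j ∈ Finset.Icc (α + 1) β, Ru n m j (Phi n α) * Ru n j (β + 1) (Psi n β)
      = ((Bmat n β).updateRow (rBF n β j) (fun b => UextRow n (β + 1) ((b : ℕ) + 1))).det
        * ((Amat n α).updateRow ⟨n - α + m, hpf⟩ (fun b => UextRow n j ((b : ℕ) + 1))).det := by
    intro j hj
    rw [Finset.mem_Icc] at hj
    have hrj : ((rBF n β j : ℕ)) < n := by rw [hrBFv j (by omega)]; omega
    rw [Ru_Phi n m α j hm (le_of_lt hmα) hαn (by omega) (by omega),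
      Ru_Psi n β j (by omega) hj.2 hβn, row_cut,
      show (⟨n - β + j - 1, by omega⟩ : Fin n) = ⟨(rBF n β j : ℕ), hrj⟩ from
        Fin.ext (by simp [hrBFv j (by omega)]),
      ← Bmat_updateRow_det n β (β + 1) (by omega) (rBF n β j) hrj, mul_comm]
  have hrm : ((rBF n β m : ℕ)) < n := by rw [hrBFv m (by omega)]; omega
  have e4 : Ru n m (β + 1) (Psi n β)
      = ((Bmat n β).updateRow (rBF n β m) (fun b => UextRow n (β + 1) ((b : ℕ) + 1))).det := by
    rw [Ru_Psi n β m hm (by omega) hβn, row_cut,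
      show (⟨n - β + m - 1, by omega⟩ : Fin n) = ⟨(rBF n β m : ℕ), hrm⟩ from
        Fin.ext (by simp [hrBFv m (by omega)]),
      ← Bmat_updateRow_det n β (β + 1) (by omega) (rBF n β m) hrm]
  have e2 : Ru n m (β + 1) (Phi n α)
      = ((Amat n α).updateRow ⟨n - α + m, hpf⟩
          (fun b => UextRow n (β + 1) ((b : ℕ) + 1))).det :=
    Ru_Phi n m α (β + 1) hm (le_of_lt hmα) hαn (by omega) hβn
  have e3 : Psi n β = (Bmat n β).det := (Bmat_det n β (by omega)).symm
  have e5 : Phi n (β + 1)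
      = ((Bmat n β).updateRow (Fin.last n)
          (fun b => UextRow n (β + 1) ((b : ℕ) + 1))).det := Phi_beta1 n β hβn
  have e6 : Ru n m α (Psi n (α - 1))
      = -((Amat n α).updateRow ⟨n - α + m, hpf⟩
          (fun b => if (b : ℕ) = n then (1 : Pzu) else 0)).det := by
    rw [detA_erow n m α hm hmα hαn, neg_neg]
  -- Step 2: Cramer's rule expansion.
  have hC : (Bmat n β).det * ((Amat n α).updateRow ⟨n - α + m, hpf⟩
        (fun b => UextRow n (β + 1) ((b : ℕ) + 1))).det
      = ∑ r : Fin (n + 1),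
          ((Bmat n β).updateRow r (fun b => UextRow n (β + 1) ((b : ℕ) + 1))).det
            * ((Amat n α).updateRow ⟨n - α + m, hpf⟩ ((Bmat n β) r)).det := by
    have h0 : ((Amat n α).updateRow ⟨n - α + m, hpf⟩
          (fun b => (Bmat n β).det * UextRow n (β + 1) ((b : ℕ) + 1))).det
        = (Bmat n β).det * ((Amat n α).updateRow ⟨n - α + m, hpf⟩
            (fun b => UextRow n (β + 1) ((b : ℕ) + 1))).det :=
      Matrix.det_updateRow_smul (Amat n α) ⟨n - α + m, hpf⟩ (Bmat n β).det
        (fun b => UextRow n (β + 1) ((b : ℕ) + 1))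
    rw [← h0,
      show (fun b : Fin (n + 1) => (Bmat n β).det * UextRow n (β + 1) ((b : ℕ) + 1))
        = fun b : Fin (n + 1) => ∑ r : Fin (n + 1),
            ((Bmat n β).updateRow r (fun b' => UextRow n (β + 1) ((b' : ℕ) + 1))).det
              * (Bmat n β) r b from funext fun b =>
          cramer_rows (Bmat n β) (fun b' => UextRow n (β + 1) ((b' : ℕ) + 1)) b]
    exact det_updateRow_finset_sum _ _ _ _ _
  -- Step 3: reduce the full sum to the surviving terms.
  have hred : (∑ r : Fin (n + 1),
        ((Bmat n β).updateRow r (fun b => UextRow n (β + 1) ((b : ℕ) + 1))).det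
          * ((Amat n α).updateRow ⟨n - α + m, hpf⟩ ((Bmat n β) r)).det)
      = ((Bmat n β).updateRow (rBF n β m) (fun b => UextRow n (β + 1) ((b : ℕ) + 1))).det
          * (Amat n α).det
        + (∑ j ∈ Finset.Icc (α + 1) β,
            ((Bmat n β).updateRow (rBF n β j) (fun b => UextRow n (β + 1) ((b : ℕ) + 1))).det
              * ((Amat n α).updateRow ⟨n - α + m, hpf⟩
                  (fun b => UextRow n j ((b : ℕ) + 1))).det)
        + ((Bmat n β).updateRow (Fin.last n) (fun b => UextRow n (β + 1) ((b : ℕ) + 1))).det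
            * ((Amat n α).updateRow ⟨n - α + m, hpf⟩
                (fun b => if (b : ℕ) = n then (1 : Pzu) else 0)).det := by
    set f : ℕ → Pzu := fun i => if h : i < n + 1 then
        ((Bmat n β).updateRow ⟨i, h⟩ (fun b => UextRow n (β + 1) ((b : ℕ) + 1))).det
          * ((Amat n α).updateRow ⟨n - α + m, hpf⟩ ((Bmat n β) ⟨i, h⟩)).det
      else 0 with hf
    have hstep1 : (∑ r : Fin (n + 1),
          ((Bmat n β).updateRow r (fun b => UextRow n (β + 1) ((b : ℕ) + 1))).det
            * ((Amat n α).updateRow ⟨n - α + m, hpf⟩ ((Bmat n β) r)).det)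
        = ∑ i ∈ Finset.range (n + 1), f i := by
      rw [← Fin.sum_univ_eq_sum_range]
      refine Finset.sum_congr rfl fun r _ => ?_
      simp only [hf]
      rw [dif_pos (r.isLt)]
    rw [hstep1]
    set S : Finset ℕ := insert n (insert (n - β + m - 1)
        ((Finset.Icc (α + 1) β).image (fun j => n - β + j - 1))) with hS
    have hsub : S ⊆ Finset.range (n + 1) := by
      intro i hi
      simp only [hS, Finset.mem_insert, Finset.mem_image, Finset.mem_Icc] at hi
      rw [Finset.mem_range]
      rcases hi with h | h | ⟨j, hj, rfl⟩ <;> omega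
    have hzero : ∀ i ∈ Finset.range (n + 1), i ∉ S → f i = 0 := by
      intro i hi hiS
      rw [Finset.mem_range] at hi
      simp only [hS, Finset.mem_insert, Finset.mem_image, Finset.mem_Icc, not_or,
        not_exists] at hiS
      obtain ⟨hi1, hi2, hi3⟩ := hiS
      simp only [hf]
      rw [dif_pos hi]
      refine mul_eq_zero_of_right _ ?_
      refine vanish n m α β hm hmα hαβ hβn ⟨i, hi⟩ hi1
        (show i + 1 - (n - β) ≠ m by omega) ?_
      rintro ⟨ha, hb⟩
      have ha' : α + 1 ≤ i + 1 - (n - β) := ha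
      have hb' : i + 1 - (n - β) ≤ β := hb
      exact hi3 (i + 1 - (n - β)) ⟨⟨ha', hb'⟩, by omega⟩
    rw [← Finset.sum_subset hsub hzero]
    have hn1 : (n : ℕ) ∉ insert (n - β + m - 1)
        ((Finset.Icc (α + 1) β).image (fun j => n - β + j - 1)) := by
      simp only [Finset.mem_insert, Finset.mem_image, Finset.mem_Icc, not_or, not_exists]
      constructor
      · omega
      · intro j; rintro ⟨hj, hj2⟩; omega
    have hm1 : (n - β + m - 1) ∉ (Finset.Icc (α + 1) β).image (fun j => n - β + j - 1) := by
      simp only [Finset.mem_image, Finset.mem_Icc, not_exists]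
      intro j; rintro ⟨hj, hj2⟩; omega
    have hinj : ∀ x ∈ Finset.Icc (α + 1) β, ∀ y ∈ Finset.Icc (α + 1) β,
        (fun j => n - β + j - 1) x = (fun j => n - β + j - 1) y → x = y := by
      intro x hx y hy h
      simp only [Finset.mem_Icc] at hx hy
      simp only at h
      omega
    rw [hS, Finset.sum_insert hn1, Finset.sum_insert hm1, Finset.sum_image hinj]
    -- Evaluate the three surviving pieces.
    have hAp : (Amat n α) ⟨n - α + m, hpf⟩
        = fun b : Fin (n + 1) => UextRow n m ((b : ℕ) + 1) := by
      funext b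
      rw [Amat_row_u n α ⟨n - α + m, hpf⟩ (by simp; omega) b]
      congr 1
      simp
      omega
    have hBm : (Bmat n β) (rBF n β m)
        = fun b : Fin (n + 1) => UextRow n m ((b : ℕ) + 1) := by
      funext b
      rw [Bmat_row_u n β (rBF n β m) (by rw [hrBFv m (by omega)]; omega) hrm b]
      congr 1
      rw [hrBFv m (by omega)]
      omega
    have hlast : f n = ((Bmat n β).updateRow (Fin.last n)
        (fun b => UextRow n (β + 1) ((b : ℕ) + 1))).det
          * ((Amat n α).updateRow ⟨n - α + m, hpf⟩
              (fun b => if (b : ℕ) = n then (1 : Pzu) else 0)).det := by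
      simp only [hf]
      rw [dif_pos (by omega : n < n + 1)]
      have h1 : (⟨n, by omega⟩ : Fin (n + 1)) = Fin.last n := rfl
      rw [h1, show (Bmat n β) (Fin.last n)
        = fun b : Fin (n + 1) => if (b : ℕ) = n then (1 : Pzu) else 0 from
          funext (Bmat_row_last n β)]
    have hmid : f (n - β + m - 1)
        = ((Bmat n β).updateRow (rBF n β m)
            (fun b => UextRow n (β + 1) ((b : ℕ) + 1))).det * (Amat n α).det := by
      simp only [hf]
      rw [dif_pos (by omega : n - β + m - 1 < n + 1)]
      rw [show (⟨n - β + m - 1, by omega⟩ : Fin (n + 1)) = rBF n β m from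
        Fin.ext (by rw [hrBFv m (by omega)])]
      rw [hBm, ← hAp, Matrix.updateRow_eq_self]
    have hjs : ∀ j ∈ Finset.Icc (α + 1) β, f (n - β + j - 1)
        = ((Bmat n β).updateRow (rBF n β j)
            (fun b => UextRow n (β + 1) ((b : ℕ) + 1))).det
          * ((Amat n α).updateRow ⟨n - α + m, hpf⟩
              (fun b => UextRow n j ((b : ℕ) + 1))).det := by
      intro j hj
      rw [Finset.mem_Icc] at hj
      have hrj : ((rBF n β j : ℕ)) < n := by rw [hrBFv j (by omega)]; omega
      simp only [hf]
      rw [dif_pos (by omega : n - β + j - 1 < n + 1)]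
      rw [show (⟨n - β + j - 1, by omega⟩ : Fin (n + 1)) = rBF n β j from
        Fin.ext (by rw [hrBFv j (by omega)])]
      have hBj : (Bmat n β) (rBF n β j)
          = fun b : Fin (n + 1) => UextRow n j ((b : ℕ) + 1) := by
        funext b
        rw [Bmat_row_u n β (rBF n β j) (by rw [hrBFv j (by omega)]; omega) hrj b]
        congr 1
        rw [hrBFv j (by omega)]
        omega
      rw [hBj]
    rw [hlast, hmid, Finset.sum_congr rfl hjs]
    ring
  -- Step 4: put everything together.
  rw [Finset.sum_congr rfl e1, e2, e4, e5, e6, e3, Phi_eq n α]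
  linear_combination -(hC.trans hred)
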